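/- Let G be a group and ρ : G → GL(V) a finite-dimensional complex representation that is semisimple. Then any two ℝ-structures of ρ are isomorphic as real representations of G. -/

import Mathlib

set_option linter.unusedSectionVars false

open Complex Polynomial

namespace Stmt6Aux

variable {V : Type*} [AddCommGroup V] [Module ℂ V] [Module ℝ V] [IsScalarTower ℝ ℂ V]

lemma I_smul_I_smul (x : V) : Complex.I • Complex.I • x = -x := by
  rw [smul_smul, Complex.I_mul_I, neg_one_smul]

noncomputable def cnj (W : Submodule ℝ V)
    (h : Function.Bijective fun p : W × W => (p.1 : V) + Complex.I • (p.2 : V)) : V → V :=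
  fun v => (((Equiv.ofBijective _ h).symm v).1 : V) -
    Complex.I • ((((Equiv.ofBijective _ h).symm v).2 : W) : V)

variable (W : Submodule ℝ V)
  (h : Function.Bijective fun p : W × W => (p.1 : V) + Complex.I • (p.2 : V))

include h

lemma cnj_spec (a b : W) :
    cnj W h ((a : V) + Complex.I • (b : V)) = (a : V) - Complex.I • (b : V) := by
  have h1 : (Equiv.ofBijective _ h).symm ((a : V) + Complex.I • (b : V)) = (a, b) := by
    have : ((a : V) + Complex.I • (b : V)) = (Equiv.ofBijective _ h) (a, b) := rfl
    rw [this, Equiv.symm_apply_apply]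
  simp [cnj, h1]

lemma exists_decomp (v : V) : ∃ a b : W, v = (a : V) + Complex.I • (b : V) := by
  obtain ⟨⟨a, b⟩, hab⟩ := h.2 v
  exact ⟨a, b, hab.symm⟩

lemma cnj_of_mem {v : V} (hv : v ∈ W) : cnj W h v = v := by
  have := cnj_spec W h ⟨v, hv⟩ 0
  simpa using this

lemma mem_of_cnj_fixed {v : V} (hv : cnj W h v = v) : v ∈ W := by
  obtain ⟨a, b, rfl⟩ := exists_decomp W h v
  rw [cnj_spec W h a b] at hv
  have hx : (a : V) + -(Complex.I • (b : V)) = (a : V) + Complex.I • (b : V) := by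
    rw [← sub_eq_add_neg]; exact hv
  have h2 : Complex.I • (b : V) + Complex.I • (b : V) = 0 :=
    neg_eq_iff_add_eq_zero.mp (add_left_cancel hx)
  have hb : Complex.I • (b : V) = 0 := by
    have hb2 : (2 : ℝ) • (Complex.I • (b : V)) = 0 := by
      rw [two_smul]; exact h2
    have := smul_eq_zero.mp hb2
    simpa using this
  rw [hb, add_zero]; exact a.2

lemma cnj_add (v w : V) : cnj W h (v + w) = cnj W h v + cnj W h w := by
  obtain ⟨a, b, rfl⟩ := exists_decomp W h v
  obtain ⟨c, d, rfl⟩ := exists_decomp W h w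
  have h1 : (a : V) + Complex.I • (b : V) + ((c : V) + Complex.I • (d : V)) =
      ((a + c : W) : V) + Complex.I • ((b + d : W) : V) := by
    push_cast; module
  rw [h1, cnj_spec W h (a + c) (b + d), cnj_spec W h a b, cnj_spec W h c d]
  push_cast; module

lemma cnj_real_smul (r : ℝ) (v : V) : cnj W h (r • v) = r • cnj W h v := by
  obtain ⟨a, b, rfl⟩ := exists_decomp W h v
  have h1 : r • ((a : V) + Complex.I • (b : V)) =
      ((r • a : W) : V) + Complex.I • ((r • b : W) : V) := by
    push_cast
    rw [smul_add, smul_comm r Complex.I]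
  rw [h1, cnj_spec W h (r • a) (r • b), cnj_spec W h a b]
  push_cast
  rw [smul_sub, smul_comm r Complex.I]

lemma cnj_I_smul (v : V) : cnj W h (Complex.I • v) = -(Complex.I • cnj W h v) := by
  obtain ⟨a, b, rfl⟩ := exists_decomp W h v
  have h1 : Complex.I • ((a : V) + Complex.I • (b : V)) =
      ((-b : W) : V) + Complex.I • (a : V) := by
    push_cast
    rw [smul_add, I_smul_I_smul]
    module
  rw [h1, cnj_spec W h (-b) a, cnj_spec W h a b]
  push_cast
  rw [smul_sub, I_smul_I_smul]
  module

lemma cnj_cnj (v : V) : cnj W h (cnj W h v) = v := by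
  obtain ⟨a, b, rfl⟩ := exists_decomp W h v
  rw [cnj_spec W h a b]
  have h1 : (a : V) - Complex.I • (b : V) = (a : V) + Complex.I • ((-b : W) : V) := by
    push_cast; module
  rw [h1, cnj_spec W h a (-b)]
  push_cast; module

lemma cnj_neg (v : V) : cnj W h (-v) = -cnj W h v := by
  have := cnj_real_smul W h (-1) v
  simpa using this

lemma cnj_sub (v w : V) : cnj W h (v - w) = cnj W h v - cnj W h w := by
  rw [sub_eq_add_neg, cnj_add, cnj_neg, sub_eq_add_neg]

end Stmt6Aux

open Complex Polynomial Stmt6Aux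

/-- Let `G` be a group and `ρ : G → GL(V)` a finite-dimensional
complex representation that is semisimple (every invariant subspace has an invariant
complement).  Then any two `ℝ`-structures of `ρ` are isomorphic as real
representations of `G`.  Here an `ℝ`-structure is a `ρ`-invariant real subspace
`V₀ ⊆ V` such that the canonical map `V₀ ⊗_ℝ ℂ → V`, `(a, b) ↦ a + i b`, is
bijective, and an isomorphism of `ℝ`-structures is a `G`-equivariant `ℝ`-linear
equivalence. -/
theorem stmt6 {G V : Type*} [Group G]
    [AddCommGroup V] [Module ℂ V] [Module ℝ V] [IsScalarTower ℝ ℂ V]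
    [FiniteDimensional ℂ V]
    (ρ : Representation ℂ G V)
    (hss : ∀ W : Submodule ℂ V, (∀ g : G, W.map (ρ g) ≤ W) →
      ∃ W' : Submodule ℂ V, (∀ g : G, W'.map (ρ g) ≤ W') ∧ IsCompl W W')
    (V₀ V₁ : Submodule ℝ V)
    (h₀inv : ∀ (g : G), ∀ v ∈ V₀, ρ g v ∈ V₀)
    (h₁inv : ∀ (g : G), ∀ v ∈ V₁, ρ g v ∈ V₁)
    (h₀ : Function.Bijective fun p : V₀ × V₀ => (p.1 : V) + Complex.I • (p.2 : V))
    (h₁ : Function.Bijective fun p : V₁ × V₁ => (p.1 : V) + Complex.I • (p.2 : V)) :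
    ∃ e : V₀ ≃ₗ[ℝ] V₁, ∀ (g : G) (v : V₀),
      (e ⟨ρ g (v : V), h₀inv g (v : V) v.2⟩ : V) = ρ g (e v : V) := by
  classical
  clear hss
  set σ₀ := cnj V₀ h₀ with hσ₀def
  set σ₁ := cnj V₁ h₁ with hσ₁def
  -- restate the conjugation lemmas in terms of σ₀, σ₁
  have s0spec : ∀ a b : V₀, σ₀ ((a : V) + Complex.I • (b : V))
      = (a : V) - Complex.I • (b : V) := fun a b => cnj_spec V₀ h₀ a b
  have s1spec : ∀ a b : V₁, σ₁ ((a : V) + Complex.I • (b : V))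
      = (a : V) - Complex.I • (b : V) := fun a b => cnj_spec V₁ h₁ a b
  have s0add : ∀ v w : V, σ₀ (v + w) = σ₀ v + σ₀ w := fun v w => cnj_add V₀ h₀ v w
  have s1add : ∀ v w : V, σ₁ (v + w) = σ₁ v + σ₁ w := fun v w => cnj_add V₁ h₁ v w
  have s0smul : ∀ (r : ℝ) (v : V), σ₀ (r • v) = r • σ₀ v :=
    fun r v => cnj_real_smul V₀ h₀ r v
  have s1smul : ∀ (r : ℝ) (v : V), σ₁ (r • v) = r • σ₁ v :=
    fun r v => cnj_real_smul V₁ h₁ r v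
  have s0I : ∀ v : V, σ₀ (Complex.I • v) = -(Complex.I • σ₀ v) :=
    fun v => cnj_I_smul V₀ h₀ v
  have s1I : ∀ v : V, σ₁ (Complex.I • v) = -(Complex.I • σ₁ v) :=
    fun v => cnj_I_smul V₁ h₁ v
  have s0cc : ∀ v : V, σ₀ (σ₀ v) = v := fun v => cnj_cnj V₀ h₀ v
  have s1cc : ∀ v : V, σ₁ (σ₁ v) = v := fun v => cnj_cnj V₁ h₁ v
  have s0neg : ∀ v : V, σ₀ (-v) = -σ₀ v := fun v => cnj_neg V₀ h₀ v
  have s1neg : ∀ v : V, σ₁ (-v) = -σ₁ v := fun v => cnj_neg V₁ h₁ v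
  have s0sub : ∀ v w : V, σ₀ (v - w) = σ₀ v - σ₀ w := fun v w => cnj_sub V₀ h₀ v w
  have s1sub : ∀ v w : V, σ₁ (v - w) = σ₁ v - σ₁ w := fun v w => cnj_sub V₁ h₁ v w
  have s0mem : ∀ v : V, σ₀ v = v → v ∈ V₀ := fun v hv => mem_of_cnj_fixed V₀ h₀ hv
  have s1mem : ∀ v : V, σ₁ v = v → v ∈ V₁ := fun v hv => mem_of_cnj_fixed V₁ h₁ hv
  have s0of : ∀ v ∈ V₀, σ₀ v = v := fun v hv => cnj_of_mem V₀ h₀ hv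
  have s1of : ∀ v ∈ V₁, σ₁ v = v := fun v hv => cnj_of_mem V₁ h₁ hv
  -- conjugations commute with the action
  have hρ₀ : ∀ (g : G) (v : V), σ₀ (ρ g v) = ρ g (σ₀ v) := by
    intro g v
    obtain ⟨a, b, rfl⟩ := exists_decomp V₀ h₀ v
    have h1 : ρ g ((a : V) + Complex.I • (b : V))
        = ((⟨ρ g a, h₀inv g a a.2⟩ : V₀) : V)
          + Complex.I • ((⟨ρ g b, h₀inv g b b.2⟩ : V₀) : V) := by
      simp [map_add, map_smul]
    rw [h1, s0spec ⟨ρ g a, h₀inv g a a.2⟩ ⟨ρ g b, h₀inv g b b.2⟩, s0spec a b]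
    simp [map_sub, map_smul]
  have hρ₁ : ∀ (g : G) (v : V), σ₁ (ρ g v) = ρ g (σ₁ v) := by
    intro g v
    obtain ⟨a, b, rfl⟩ := exists_decomp V₁ h₁ v
    have h1 : ρ g ((a : V) + Complex.I • (b : V))
        = ((⟨ρ g a, h₁inv g a a.2⟩ : V₁) : V)
          + Complex.I • ((⟨ρ g b, h₁inv g b b.2⟩ : V₁) : V) := by
      simp [map_add, map_smul]
    rw [h1, s1spec ⟨ρ g a, h₁inv g a a.2⟩ ⟨ρ g b, h₁inv g b b.2⟩, s1spec a b]
    simp [map_sub, map_smul]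
  -- decomposition of complex scalars
  have hsmul : ∀ (c : ℂ) (v : V),
      c • v = c.re • v + c.im • (Complex.I • v) := by
    intro c v
    have h1 : c • v = ((c.re : ℂ) + (c.im : ℂ) * Complex.I) • v := by
      rw [Complex.re_add_im c]
    rw [h1, add_smul, mul_smul]
    rw [show ((c.re : ℂ)) • v = c.re • v from algebraMap_smul ℂ c.re v,
      show ((c.im : ℂ)) • (Complex.I • v) = c.im • (Complex.I • v) from
        algebraMap_smul ℂ c.im _]
  -- τ = σ₁ ∘ σ₀ is ℂ-linear
  let τ : Module.End ℂ V :=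
    { toFun := fun v => σ₁ (σ₀ v)
      map_add' := fun v w => by
        show σ₁ (σ₀ (v + w)) = σ₁ (σ₀ v) + σ₁ (σ₀ w)
        rw [s0add, s1add]
      map_smul' := fun c v => by
        show σ₁ (σ₀ (c • v)) = c • σ₁ (σ₀ v)
        rw [hsmul c v, s0add, s0smul, s0smul, s0I, s1add, s1smul, s1smul,
          s1neg, s1I, hsmul c (σ₁ (σ₀ v))]
        rw [neg_neg] }
  have hτ : ∀ v : V, τ v = σ₁ (σ₀ v) := fun _ => rfl
  have hτρ : ∀ (g : G) (v : V), τ (ρ g v) = ρ g (τ v) := by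
    intro g v; rw [hτ, hρ₀, hρ₁, hτ]
  have hτbij : Function.Bijective τ := by
    refine Function.bijective_iff_has_inverse.mpr ⟨fun v => σ₀ (σ₁ v), ?_, ?_⟩
    · intro v
      show σ₀ (σ₁ (τ v)) = v
      rw [hτ, s1cc, s0cc]
    · intro v
      show τ (σ₀ (σ₁ v)) = v
      rw [hτ, s0cc, s1cc]
  have hs1τ : ∀ v : V, σ₁ (τ v) = σ₀ v := fun v => s1cc (σ₀ v)
  have hτσ₀ : ∀ v : V, τ (σ₀ v) = σ₁ v := by
    intro v; rw [hτ, s0cc]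
  set A : Module.End ℂ V := 1 + τ with hA
  set B : Module.End ℂ V := Complex.I • (1 - τ) with hB
  have hexp : ∀ (c : ℂ) (v : V),
      (A + c • B) v = v + τ v + c • (Complex.I • (v - τ v)) := by
    intro c v
    simp [hA, hB, LinearMap.add_apply, LinearMap.smul_apply, LinearMap.sub_apply,
      Module.End.one_apply]
  -- the key intertwining identity
  have hkey : ∀ (z : ℝ) (v : V),
      σ₁ ((A + (z : ℂ) • B) v) = (A + (z : ℂ) • B) (σ₀ v) := by
    intro z v
    rw [hexp, hexp]
    have hz1 : ((z : ℂ)) • (Complex.I • (v - τ v)) = z • (Complex.I • (v - τ v)) :=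
      algebraMap_smul ℂ z _
    have hz2 : ((z : ℂ)) • (Complex.I • (σ₀ v - τ (σ₀ v))) =
        z • (Complex.I • (σ₀ v - τ (σ₀ v))) := algebraMap_smul ℂ z _
    rw [hz1, hz2, s1add, s1add, s1smul, s1I, s1sub, hs1τ, hτσ₀]
    have h5 : -(Complex.I • (σ₁ v - σ₀ v)) = Complex.I • (σ₀ v - σ₁ v) := by
      rw [← smul_neg, neg_sub]
    rw [h5]
    abel
  -- determinant of A + I • B is nonzero
  have hAB : A + Complex.I • B = (2 : ℂ) • τ := by
    rw [hA, hB, smul_smul, Complex.I_mul_I, neg_one_smul]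
    module
  have hdetτ : LinearMap.det τ ≠ 0 := by
    have := (LinearEquiv.ofBijective τ hτbij).isUnit_det'
    have h2 : ((LinearEquiv.ofBijective τ hτbij : V ≃ₗ[ℂ] V) : Module.End ℂ V) = τ := rfl
    rw [h2] at this
    exact this.ne_zero
  have hdetI : LinearMap.det (A + Complex.I • B) ≠ 0 := by
    rw [hAB, LinearMap.det_smul]
    exact mul_ne_zero (pow_ne_zero _ two_ne_zero) hdetτ
  -- a polynomial detecting invertibility
  let bV := Module.finBasis ℂ V
  set MA := LinearMap.toMatrix bV bV A with hMA
  set MB := LinearMap.toMatrix bV bV B with hMB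
  set p : Polynomial ℂ :=
    (MA.map (C : ℂ →+* ℂ[X]) + (X : ℂ[X]) • MB.map (C : ℂ →+* ℂ[X])).det with hp
  have hev : ∀ c : ℂ, p.eval c = LinearMap.det (A + c • B) := by
    intro c
    have h1 : p.eval c = (evalRingHom c) p := rfl
    have h2 : (evalRingHom c)
        ((MA.map (C : ℂ →+* ℂ[X]) + (X : ℂ[X]) • MB.map (C : ℂ →+* ℂ[X])).det)
        = ((MA.map (C : ℂ →+* ℂ[X]) + (X : ℂ[X]) • MB.map (C : ℂ →+* ℂ[X])).map
            (evalRingHom c)).det := RingHom.map_det _ _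
    have h3 : (MA.map (C : ℂ →+* ℂ[X]) + (X : ℂ[X]) • MB.map (C : ℂ →+* ℂ[X])).map
        (evalRingHom c) = MA + c • MB := by
      ext i j
      simp only [Matrix.map_apply, Matrix.add_apply, Matrix.smul_apply, smul_eq_mul,
        coe_evalRingHom, eval_add, eval_mul, eval_C, eval_X]
    have h4 : LinearMap.det (A + c • B) = (MA + c • MB).det := by
      rw [← LinearMap.det_toMatrix bV, map_add, map_smul, ← hMA, ← hMB]
    rw [h1, hp, h2, h3, h4]
  have hpne : p ≠ 0 := by
    intro h0
    apply hdetI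
    rw [← hev Complex.I, h0, eval_zero]
  obtain ⟨z, hz⟩ : ∃ z : ℝ, p.eval (z : ℂ) ≠ 0 := by
    by_contra hc
    push_neg at hc
    have hsub : Set.range ((↑) : ℝ → ℂ) ⊆ {x | p.IsRoot x} := by
      rintro _ ⟨z, rfl⟩; exact hc z
    exact (Set.infinite_range_of_injective Complex.ofReal_injective)
      ((Polynomial.finite_setOf_isRoot hpne).subset hsub)
  set α : Module.End ℂ V := A + (z : ℂ) • B with hα
  have hdet : LinearMap.det α ≠ 0 := by rw [hα, ← hev]; exact hz
  have hbij : Function.Bijective α := by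
    let αe := α.equivOfDetNeZero hdet
    have hcoe : ∀ v, αe v = α v := fun v => rfl
    exact Function.bijective_iff_has_inverse.mpr
      ⟨αe.symm, fun v => by rw [← hcoe]; exact αe.symm_apply_apply v,
        fun v => by rw [← hcoe]; exact αe.apply_symm_apply v⟩
  have hσα : ∀ v, σ₁ (α v) = α (σ₀ v) := hkey z
  have hαρ : ∀ (g : G) (v : V), α (ρ g v) = ρ g (α v) := by
    intro g v
    rw [hα, hexp, hexp, hτρ, map_add, map_add, map_smul, map_smul, map_sub]
  -- α maps V₀ bijectively onto V₁
  have hmem : ∀ v ∈ V₀, α v ∈ V₁ := by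
    intro v hv
    exact s1mem (α v) (by rw [hσα v, s0of v hv])
  have hmem' : ∀ v : V, α v ∈ V₁ → v ∈ V₀ := by
    intro v hv
    apply s0mem
    apply hbij.1
    rw [← hσα v]
    exact s1of _ hv
  let f : V₀ →ₗ[ℝ] V₁ :=
    { toFun := fun v => ⟨α v, hmem v v.2⟩
      map_add' := fun x y => by
        apply Subtype.ext
        push_cast
        rw [map_add]
      map_smul' := fun r x => by
        apply Subtype.ext
        push_cast
        rw [← algebraMap_smul ℂ r (x : V), map_smul, algebraMap_smul]
        rfl }
  have hf : ∀ x : V₀, (f x : V) = α x := fun _ => rfl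
  have hfbij : Function.Bijective f := by
    constructor
    · intro x y hxy
      apply Subtype.ext
      apply hbij.1
      rw [← hf, ← hf, hxy]
    · intro w
      obtain ⟨u, hu⟩ := hbij.2 (w : V)
      have hu0 : u ∈ V₀ := hmem' u (by rw [hu]; exact w.2)
      exact ⟨⟨u, hu0⟩, Subtype.ext (by rw [hf]; exact hu)⟩
  refine ⟨LinearEquiv.ofBijective f hfbij, ?_⟩
  intro g v
  show (f ⟨ρ g (v : V), h₀inv g (v : V) v.2⟩ : V) = ρ g ((f v : V))
  rw [hf, hf]
  exact hαρ g v
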